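/- The class of graphs representable by closed and open unit intervals is strictly contained in the class of graphs representable by closed, open, and closed-open unit intervals, which is in turn strictly contained in the class of graphs representable by all four types of unit intervals (mixed unit interval graphs). -/

import Mathlib

open Set

def IsUnitCC (I : Set ℝ) : Prop := ∃ x : ℝ, I = Set.Icc x (x + 1)
def IsUnitOO (I : Set ℝ) : Prop := ∃ x : ℝ, I = Set.Ioo x (x + 1)
def IsUnitCO (I : Set ℝ) : Prop := ∃ x : ℝ, I = Set.Ico x (x + 1)
def IsUnitOC (I : Set ℝ) : Prop := ∃ x : ℝ, I = Set.Ioc x (x + 1)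
def IsUnitInterval (I : Set ℝ) : Prop := IsUnitCC I ∨ IsUnitOO I ∨ IsUnitCO I ∨ IsUnitOC I

def IsRep {V : Type*} (G : SimpleGraph V) (f : V → Set ℝ) : Prop :=
  ∀ u v : V, u ≠ v → (G.Adj u v ↔ (f u ∩ f v).Nonempty)

def MixedUIG {V : Type*} (G : SimpleGraph V) : Prop :=
  ∃ f : V → Set ℝ, IsRep G f ∧ ∀ v, IsUnitInterval (f v)

def AlmostMixedUIG {V : Type*} (G : SimpleGraph V) : Prop :=
  ∃ f : V → Set ℝ, IsRep G f ∧ ∀ v, IsUnitCC (f v) ∨ IsUnitOO (f v) ∨ IsUnitCO (f v)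

def TwinFree {V : Type*} (G : SimpleGraph V) : Prop :=
  ∀ u v : V, insert u (G.neighborSet u) = insert v (G.neighborSet v) → u = v



def uI (x : ℝ) (l r : Bool) : Set ℝ :=
  {t | (x < t ∨ (l = true ∧ x = t)) ∧ (t < x + 1 ∨ (r = true ∧ t = x + 1))}

def Adj2 (x : ℝ) (lx rx : Bool) (y : ℝ) (ly ry : Bool) : Prop :=
  (x < y + 1 ∨ (x = y + 1 ∧ lx = true ∧ ry = true)) ∧
  (y < x + 1 ∨ (y = x + 1 ∧ ly = true ∧ rx = true))

lemma uI_cc (x : ℝ) : Set.Icc x (x+1) = uI x true true := by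
  ext t; simp [uI, Set.mem_Icc, le_iff_lt_or_eq]

lemma uI_oo (x : ℝ) : Set.Ioo x (x+1) = uI x false false := by
  ext t; simp [uI, Set.mem_Ioo]

lemma uI_co (x : ℝ) : Set.Ico x (x+1) = uI x true false := by
  ext t; simp [uI, Set.mem_Ico, le_iff_lt_or_eq]

lemma uI_oc (x : ℝ) : Set.Ioc x (x+1) = uI x false true := by
  ext t; simp [uI, Set.mem_Ioc, le_iff_lt_or_eq]

lemma uI_inter (x y : ℝ) (lx rx ly ry : Bool) :
    (uI x lx rx ∩ uI y ly ry).Nonempty ↔ Adj2 x lx rx y ly ry := by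
  constructor
  · rintro ⟨t, ⟨hx1, hx2⟩, ⟨hy1, hy2⟩⟩
    constructor
    · rcases hx1 with h1|⟨hl,h1⟩ <;> rcases hy2 with h2|⟨hr,h2⟩
      · exact Or.inl (by linarith)
      · exact Or.inl (by linarith)
      · exact Or.inl (by linarith)
      · exact Or.inr ⟨by linarith, hl, hr⟩
    · rcases hy1 with h1|⟨hl,h1⟩ <;> rcases hx2 with h2|⟨hr,h2⟩
      · exact Or.inl (by linarith)
      · exact Or.inl (by linarith)
      · exact Or.inl (by linarith)
      · exact Or.inr ⟨by linarith, hl, hr⟩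
  · rintro ⟨h1, h2⟩
    rcases h1 with h1|⟨e1,hlx,hry⟩
    · rcases h2 with h2|⟨e2,hly,hrx⟩
      · have hax : x ≤ max x y := le_max_left x y
        have hay : y ≤ max x y := le_max_right x y
        have hbx : min (x+1) (y+1) ≤ x+1 := min_le_left _ _
        have hby : min (x+1) (y+1) ≤ y+1 := min_le_right _ _
        have hmm : max x y < min (x+1) (y+1) := by
          rcases max_cases x y with ⟨he,_⟩|⟨he,_⟩ <;>
            rcases min_cases (x+1) (y+1) with ⟨he2,_⟩|⟨he2,_⟩ <;> rw [he, he2] <;> linarith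
        refine ⟨(max x y + min (x+1) (y+1))/2, ⟨Or.inl (by linarith), Or.inl (by linarith)⟩,
          ⟨Or.inl (by linarith), Or.inl (by linarith)⟩⟩
      · exact ⟨y, ⟨Or.inl (by linarith), Or.inr ⟨hrx, by linarith⟩⟩,
          ⟨Or.inr ⟨hly, rfl⟩, Or.inl (by linarith)⟩⟩
    · rcases h2 with h2|⟨e2,_,_⟩
      · exact ⟨x, ⟨Or.inr ⟨hlx, rfl⟩, Or.inl (by linarith)⟩,
          ⟨Or.inl (by linarith), Or.inr ⟨hry, e1⟩⟩⟩
      · exact absurd e1 (by linarith)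

lemma boolclash {a : Bool} {C : Prop} (h1 : a = true) (h2 : a = false) : C := by
  rw [h1] at h2; exact Bool.noConfusion h2

lemma bool_res_left {a b : Bool} (h : ¬(a = true ∧ b = true)) (hb : b = true) : a = false := by
  cases a with
  | false => rfl
  | true => exact absurd ⟨rfl, hb⟩ h

lemma adj2_symm {x y : ℝ} {lx rx ly ry : Bool} (h : Adj2 x lx rx y ly ry) :
    Adj2 y ly ry x lx rx := ⟨h.2, h.1⟩

lemma adj2_same {x y : ℝ} {lx rx ly ry : Bool} (h : x = y) : Adj2 x lx rx y ly ry :=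
  ⟨Or.inl (by linarith), Or.inl (by linarith)⟩

lemma adj2_le {x y : ℝ} {lx rx ly ry : Bool} (h : Adj2 x lx rx y ly ry) :
    x ≤ y + 1 ∧ y ≤ x + 1 := by
  obtain ⟨h1, h2⟩ := h
  constructor
  · rcases h1 with h|⟨h,_⟩ <;> linarith
  · rcases h2 with h|⟨h,_⟩ <;> linarith

lemma adj2_touch {x y : ℝ} {lx rx ly ry : Bool} (h : Adj2 x lx rx y ly ry)
    (he : x = y + 1) : lx = true ∧ ry = true := by
  rcases h.1 with h1|⟨_,h2,h3⟩
  · exact absurd he (by linarith)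
  · exact ⟨h2, h3⟩

lemma adj2_touch' {x y : ℝ} {lx rx ly ry : Bool} (h : Adj2 x lx rx y ly ry)
    (he : y = x + 1) : ly = true ∧ rx = true := by
  rcases h.2 with h1|⟨_,h2,h3⟩
  · exact absurd he (by linarith)
  · exact ⟨h2, h3⟩

lemma nadj2_far {x y : ℝ} {lx rx ly ry : Bool} (h : ¬ Adj2 x lx rx y ly ry) :
    y + 1 ≤ x ∨ x + 1 ≤ y := by
  rcases le_or_gt (y+1) x with h1|h1
  · exact Or.inl h1
  rcases le_or_gt (x+1) y with h2|h2
  · exact Or.inr h2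
  exact absurd ⟨Or.inl h1, Or.inl h2⟩ h

lemma nadj2_touch {x y : ℝ} {lx rx ly ry : Bool} (h : ¬ Adj2 x lx rx y ly ry)
    (he : x = y + 1) : ¬(lx = true ∧ ry = true) :=
  fun ⟨h1, h2⟩ => h ⟨Or.inr ⟨he, h1, h2⟩, Or.inl (by linarith)⟩

lemma nadj2_touch' {x y : ℝ} {lx rx ly ry : Bool} (h : ¬ Adj2 x lx rx y ly ry)
    (he : y = x + 1) : ¬(ly = true ∧ rx = true) :=
  fun ⟨h1, h2⟩ => h ⟨Or.inl (by linarith), Or.inr ⟨he, h1, h2⟩⟩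

lemma adj2_reflect {x y : ℝ} {lx rx ly ry : Bool} (h : Adj2 x lx rx y ly ry) :
    Adj2 (-x-1) rx lx (-y-1) ry ly := by
  obtain ⟨h1, h2⟩ := h
  constructor
  · rcases h2 with h|⟨he,ha,hb⟩
    · exact Or.inl (by linarith)
    · exact Or.inr ⟨by linarith, hb, ha⟩
  · rcases h1 with h|⟨he,ha,hb⟩
    · exact Or.inl (by linarith)
    · exact Or.inr ⟨by linarith, hb, ha⟩

lemma nadj2_reflect {x y : ℝ} {lx rx ly ry : Bool} (h : ¬ Adj2 x lx rx y ly ry) :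
    ¬ Adj2 (-x-1) rx lx (-y-1) ry ly := by
  intro h'
  apply h
  obtain ⟨h1, h2⟩ := h'
  constructor
  · rcases h2 with h|⟨he,ha,hb⟩
    · exact Or.inl (by linarith)
    · exact Or.inr ⟨by linarith, hb, ha⟩
  · rcases h1 with h|⟨he,ha,hb⟩
    · exact Or.inl (by linarith)
    · exact Or.inr ⟨by linarith, hb, ha⟩

/-- sorted claw: leaves x1 < x2 < x3 -/
lemma claw_core {xa x1 x2 x3 : ℝ} {la ra l1 r1 l2 r2 l3 r3 : Bool}
    (h1 : Adj2 xa la ra x1 l1 r1) (h2 : Adj2 xa la ra x2 l2 r2) (h3 : Adj2 xa la ra x3 l3 r3)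
    (n12 : ¬Adj2 x1 l1 r1 x2 l2 r2) (n23 : ¬Adj2 x2 l2 r2 x3 l3 r3)
    (o12 : x1 + 1 ≤ x2) (o23 : x2 + 1 ≤ x3) :
    x1 = xa - 1 ∧ x2 = xa ∧ x3 = xa + 1 ∧ la = true ∧ ra = true ∧
    r1 = true ∧ l2 = false ∧ r2 = false ∧ l3 = true := by
  have b1 := adj2_le h1
  have b3 := adj2_le h3
  have e1 : x1 = xa - 1 := by linarith [b1.1, b1.2, b3.1, b3.2]
  have e3 : x3 = xa + 1 := by linarith [b1.1, b1.2, b3.1, b3.2]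
  have e2 : x2 = xa := by linarith
  have t1 := adj2_touch h1 (by linarith)
  have t3 := adj2_touch' h3 (by linarith)
  have m1 : l2 = false := bool_res_left (nadj2_touch' n12 (by linarith)) t1.2
  have m2 : r2 = false := by
    have := nadj2_touch' n23 (by linarith)
    cases r2 with
    | false => rfl
    | true => exact absurd ⟨t3.1, rfl⟩ this
  exact ⟨e1, e2, e3, t1.1, t3.2, t1.2, m1, m2, t3.1⟩

/-- full claw lemma with the six possible leaf orders -/
lemma claw {xa xu xv xw : ℝ} {la ra lu ru lv rv lw rw : Bool}
    (hu : Adj2 xa la ra xu lu ru) (hv : Adj2 xa la ra xv lv rv) (hw : Adj2 xa la ra xw lw rw)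
    (nuv : ¬Adj2 xu lu ru xv lv rv) (nuw : ¬Adj2 xu lu ru xw lw rw)
    (nvw : ¬Adj2 xv lv rv xw lw rw) :
    la = true ∧ ra = true ∧
    ((xu = xa - 1 ∧ xv = xa ∧ xw = xa + 1 ∧ ru = true ∧ lv = false ∧ rv = false ∧ lw = true) ∨
     (xu = xa - 1 ∧ xw = xa ∧ xv = xa + 1 ∧ ru = true ∧ lw = false ∧ rw = false ∧ lv = true) ∨
     (xv = xa - 1 ∧ xu = xa ∧ xw = xa + 1 ∧ rv = true ∧ lu = false ∧ ru = false ∧ lw = true) ∨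
     (xw = xa - 1 ∧ xu = xa ∧ xv = xa + 1 ∧ rw = true ∧ lu = false ∧ ru = false ∧ lv = true) ∨
     (xv = xa - 1 ∧ xw = xa ∧ xu = xa + 1 ∧ rv = true ∧ lw = false ∧ rw = false ∧ lu = true) ∨
     (xw = xa - 1 ∧ xv = xa ∧ xu = xa + 1 ∧ rw = true ∧ lv = false ∧ rv = false ∧ lu = true)) := by
  have nvu := fun h => nuv (adj2_symm h)
  have nwu := fun h => nuw (adj2_symm h)
  have nwv := fun h => nvw (adj2_symm h)
  rcases nadj2_far nuv with huv|huv <;> rcases nadj2_far nuw with huw|huw <;>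
    rcases nadj2_far nvw with hvw|hvw
  · -- v<u, w<u, w<v : order w v u
    obtain ⟨p1,p2,p3,g1,g2,g3,g4,g5,g6⟩ := claw_core hw hv hu nwv nvu hvw huv
    exact ⟨g1, g2, Or.inr (Or.inr (Or.inr (Or.inr (Or.inr ⟨p1,p2,p3,g3,g4,g5,g6⟩))))⟩
  · -- v<u, w<u, v<w : order v w u
    obtain ⟨p1,p2,p3,g1,g2,g3,g4,g5,g6⟩ := claw_core hv hw hu nvw nwu hvw huw
    exact ⟨g1, g2, Or.inr (Or.inr (Or.inr (Or.inr (Or.inl ⟨p1,p2,p3,g3,g4,g5,g6⟩))))⟩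
  · -- v<u, u<w, w<v : cycle
    exact (by linarith : False).elim
  · -- v<u, u<w, v<w : order v u w
    obtain ⟨p1,p2,p3,g1,g2,g3,g4,g5,g6⟩ := claw_core hv hu hw nvu nuw huv huw
    exact ⟨g1, g2, Or.inr (Or.inr (Or.inl ⟨p1,p2,p3,g3,g4,g5,g6⟩))⟩
  · -- u<v, w<u, w<v : order w u v
    obtain ⟨p1,p2,p3,g1,g2,g3,g4,g5,g6⟩ := claw_core hw hu hv nwu nuv huw huv
    exact ⟨g1, g2, Or.inr (Or.inr (Or.inr (Or.inl ⟨p1,p2,p3,g3,g4,g5,g6⟩)))⟩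
  · -- u<v, w<u, v<w : cycle
    exact (by linarith : False).elim
  · -- u<v, u<w, w<v : order u w v
    obtain ⟨p1,p2,p3,g1,g2,g3,g4,g5,g6⟩ := claw_core hu hw hv nuw nwv huw hvw
    exact ⟨g1, g2, Or.inr (Or.inl ⟨p1,p2,p3,g3,g4,g5,g6⟩)⟩
  · -- u<v, u<w, v<w : order u v w
    obtain ⟨p1,p2,p3,g1,g2,g3,g4,g5,g6⟩ := claw_core hu hv hw nuv nvw huv hvw
    exact ⟨g1, g2, Or.inl ⟨p1,p2,p3,g3,g4,g5,g6⟩⟩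

lemma bool_res_right {a b : Bool} (h : ¬(a = true ∧ b = true)) (ha : a = true) : b = false := by
  cases b with
  | false => rfl
  | true => exact absurd ⟨ha, rfl⟩ h

/-- Rigidity of the 9-vertex gadget, oriented.  Vertices:
0=x1, 1=a, 2=y1, 3=b, 4=y2, 5=c, 6=y3, 7=w, 8=d. -/
lemma core9 {x0 x1 x2 x3 x4 x5 x6 x7 x8 : ℝ}
    {l0 r0 l1 r1 l2 r2 l3 r3 l4 r4 l5 r5 l6 r6 l7 r7 l8 r8 : Bool}
    (hA1 : Adj2 x1 l1 r1 x0 l0 r0) (hA2 : Adj2 x1 l1 r1 x2 l2 r2) (hA3 : Adj2 x1 l1 r1 x3 l3 r3)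
    (nA12 : ¬Adj2 x0 l0 r0 x2 l2 r2) (nA13 : ¬Adj2 x0 l0 r0 x3 l3 r3)
    (nA23 : ¬Adj2 x2 l2 r2 x3 l3 r3)
    (hB1 : Adj2 x3 l3 r3 x1 l1 r1) (hB2 : Adj2 x3 l3 r3 x4 l4 r4) (hB3 : Adj2 x3 l3 r3 x7 l7 r7)
    (nB12 : ¬Adj2 x1 l1 r1 x4 l4 r4) (nB13 : ¬Adj2 x1 l1 r1 x7 l7 r7)
    (nB23 : ¬Adj2 x4 l4 r4 x7 l7 r7)
    (hC1 : Adj2 x5 l5 r5 x3 l3 r3) (hC2 : Adj2 x5 l5 r5 x6 l6 r6) (hC3 : Adj2 x5 l5 r5 x8 l8 r8)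
    (nC12 : ¬Adj2 x3 l3 r3 x6 l6 r6) (nC13 : ¬Adj2 x3 l3 r3 x8 l8 r8)
    (nC23 : ¬Adj2 x6 l6 r6 x8 l8 r8)
    (n15 : ¬Adj2 x1 l1 r1 x5 l5 r5) (n45 : ¬Adj2 x4 l4 r4 x5 l5 r5)
    (n78 : ¬Adj2 x7 l7 r7 x8 l8 r8)
    (horient : x1 ≤ x3) :
    l7 = true ∧ r7 = false ∧ x3 = x1 + 1 ∧ x5 = x3 + 1 ∧ x8 = x5 + 1 ∧ r5 = true := by
  obtain ⟨hl3, hr3, permB⟩ := claw hB1 hB2 hB3 nB12 nB13 nB23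
  obtain ⟨hl5, hr5, permC⟩ := claw hC1 hC2 hC3 nC12 nC13 nC23
  obtain ⟨hl1, hr1, permA⟩ := claw hA1 hA2 hA3 nA12 nA13 nA23
  have hx3 : x3 = x1 + 1 := by
    rcases permA with ⟨_,_,e,_⟩|⟨_,_,_,_,f,_⟩|⟨_,_,e,_⟩|⟨e,_⟩|⟨_,_,_,_,f,_⟩|⟨e,_⟩
    · exact e
    · exact boolclash hl3 f
    · exact e
    · linarith
    · exact boolclash hl3 f
    · linarith
  have hx5 : x5 = x3 + 1 := by
    rcases permC with ⟨e,_⟩|⟨e,_⟩|⟨_,_,_,_,f,_⟩|⟨_,_,_,_,f,_⟩|⟨_,_,e,_⟩|⟨_,_,e,_⟩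
    · linarith
    · linarith
    · exact boolclash hl3 f
    · exact boolclash hl3 f
    · exact absurd (adj2_same (show x1 = x5 by linarith)) n15
    · exact absurd (adj2_same (show x1 = x5 by linarith)) n15
  have hB : x7 = x3 + 1 ∧ l7 = true := by
    rcases permB with ⟨_,_,e3,_,_,_,f4⟩|⟨_,e2,e3,_⟩|⟨_,e2,_⟩|⟨_,e2,_⟩|⟨_,_,e3,_⟩|⟨_,_,e3,_⟩
    · exact ⟨e3, f4⟩
    · exact absurd (adj2_same (show x4 = x5 by linarith)) n45
    · exact (by linarith : False).elim
    · exact (by linarith : False).elim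
    · exact (by linarith : False).elim
    · exact (by linarith : False).elim
  have hC : x8 = x5 + 1 ∧ l8 = true := by
    rcases permC with ⟨_,_,e3,_,_,_,f4⟩|⟨_,e2,_⟩|⟨_,e2,_⟩|⟨_,e2,_⟩|⟨_,_,e3,_⟩|⟨_,_,e3,_⟩
    · exact ⟨e3, f4⟩
    · exact absurd (adj2_same (show x7 = x8 by linarith [hB.1])) n78
    · exact (by linarith : False).elim
    · exact (by linarith : False).elim
    · exact (by linarith : False).elim
    · exact (by linarith : False).elim
  have hr7 : r7 = false :=
    bool_res_right (nadj2_touch' n78 (show x8 = x7 + 1 by linarith [hB.1, hC.1])) hC.2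
  exact ⟨hB.2, hr7, hx3, hx5, hC.1, hr5⟩

/-- Rigidity of the 14-vertex gadget, oriented.  Additional vertices:
9=y4, 10=w2, 11=e, 12=y5, 13=t. -/
lemma core14 {x0 x1 x2 x3 x4 x5 x6 x7 x8 x9 x10 x11 x12 x13 : ℝ}
    {l0 r0 l1 r1 l2 r2 l3 r3 l4 r4 l5 r5 l6 r6 l7 r7 l8 r8 l9 r9 l10 r10 l11 r11 l12 r12 l13 r13 : Bool}
    (hA1 : Adj2 x1 l1 r1 x0 l0 r0) (hA2 : Adj2 x1 l1 r1 x2 l2 r2) (hA3 : Adj2 x1 l1 r1 x3 l3 r3)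
    (nA12 : ¬Adj2 x0 l0 r0 x2 l2 r2) (nA13 : ¬Adj2 x0 l0 r0 x3 l3 r3)
    (nA23 : ¬Adj2 x2 l2 r2 x3 l3 r3)
    (hB1 : Adj2 x3 l3 r3 x1 l1 r1) (hB2 : Adj2 x3 l3 r3 x4 l4 r4) (hB3 : Adj2 x3 l3 r3 x7 l7 r7)
    (nB12 : ¬Adj2 x1 l1 r1 x4 l4 r4) (nB13 : ¬Adj2 x1 l1 r1 x7 l7 r7)
    (nB23 : ¬Adj2 x4 l4 r4 x7 l7 r7)
    (hC1 : Adj2 x5 l5 r5 x3 l3 r3) (hC2 : Adj2 x5 l5 r5 x6 l6 r6) (hC3 : Adj2 x5 l5 r5 x8 l8 r8)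
    (nC12 : ¬Adj2 x3 l3 r3 x6 l6 r6) (nC13 : ¬Adj2 x3 l3 r3 x8 l8 r8)
    (nC23 : ¬Adj2 x6 l6 r6 x8 l8 r8)
    (hD1 : Adj2 x8 l8 r8 x5 l5 r5) (hD2 : Adj2 x8 l8 r8 x9 l9 r9) (hD3 : Adj2 x8 l8 r8 x11 l11 r11)
    (nD12 : ¬Adj2 x5 l5 r5 x9 l9 r9) (nD13 : ¬Adj2 x5 l5 r5 x11 l11 r11)
    (nD23 : ¬Adj2 x9 l9 r9 x11 l11 r11)
    (hE1 : Adj2 x11 l11 r11 x10 l10 r10) (hE2 : Adj2 x11 l11 r11 x12 l12 r12)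
    (hE3 : Adj2 x11 l11 r11 x13 l13 r13)
    (nE12 : ¬Adj2 x10 l10 r10 x12 l12 r12) (nE13 : ¬Adj2 x10 l10 r10 x13 l13 r13)
    (nE23 : ¬Adj2 x12 l12 r12 x13 l13 r13)
    (n15 : ¬Adj2 x1 l1 r1 x5 l5 r5) (n45 : ¬Adj2 x4 l4 r4 x5 l5 r5)
    (n78 : ¬Adj2 x7 l7 r7 x8 l8 r8)
    (hdw2 : Adj2 x8 l8 r8 x10 l10 r10) (ncw2 : ¬Adj2 x5 l5 r5 x10 l10 r10)
    (horient : x1 ≤ x3) :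
    l7 = true ∧ r7 = false ∧ l10 = false ∧ r10 = true := by
  obtain ⟨hl7, hr7, hx3, hx5, hx8, hr5⟩ := core9 hA1 hA2 hA3 nA12 nA13 nA23 hB1 hB2 hB3
    nB12 nB13 nB23 hC1 hC2 hC3 nC12 nC13 nC23 n15 n45 n78 horient
  obtain ⟨hl8, hr8, permD⟩ := claw hD1 hD2 hD3 nD12 nD13 nD23
  obtain ⟨hl11, hr11, permE⟩ := claw hE1 hE2 hE3 nE12 nE13 nE23
  have hx11 : x11 = x8 + 1 := by
    rcases permD with ⟨_,_,e,_⟩|⟨_,_,_,_,f,_⟩|⟨_,e,_⟩|⟨_,e,_⟩|⟨_,_,e,_⟩|⟨_,_,e,_⟩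
    · exact e
    · exact boolclash hl11 f
    · exact (by linarith : False).elim
    · exact (by linarith : False).elim
    · exact (by linarith : False).elim
    · exact (by linarith : False).elim
  have hE : x10 = x8 ∧ r10 = true := by
    rcases permE with ⟨e,_,_,f,_⟩|⟨e,_,_,f,_⟩|⟨_,e,_,_,f,_⟩|⟨_,e,_,_,f,_⟩|⟨_,_,e,_⟩|⟨_,_,e,_⟩
    · exact ⟨by linarith, f⟩
    · exact ⟨by linarith, f⟩
    · exfalso
      rcases hdw2.2 with h|⟨_,hl,_⟩
      · linarith
      · exact boolclash hl f
    · exfalso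
      rcases hdw2.2 with h|⟨_,hl,_⟩
      · linarith
      · exact boolclash hl f
    · exfalso
      rcases hdw2.2 with h|⟨h,_⟩ <;> linarith
    · exfalso
      rcases hdw2.2 with h|⟨h,_⟩ <;> linarith
  have hl10 : l10 = false :=
    bool_res_left (nadj2_touch' ncw2 (show x10 = x5 + 1 by linarith [hE.1])) hr5
  exact ⟨hl7, hr7, hl10, hE.2⟩


/-- unoriented key lemma for the 9-vertex gadget -/
lemma key9 {x0 x1 x2 x3 x4 x5 x6 x7 x8 : ℝ}
    {l0 r0 l1 r1 l2 r2 l3 r3 l4 r4 l5 r5 l6 r6 l7 r7 l8 r8 : Bool}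
    (hA1 : Adj2 x1 l1 r1 x0 l0 r0) (hA2 : Adj2 x1 l1 r1 x2 l2 r2) (hA3 : Adj2 x1 l1 r1 x3 l3 r3)
    (nA12 : ¬Adj2 x0 l0 r0 x2 l2 r2) (nA13 : ¬Adj2 x0 l0 r0 x3 l3 r3)
    (nA23 : ¬Adj2 x2 l2 r2 x3 l3 r3)
    (hB1 : Adj2 x3 l3 r3 x1 l1 r1) (hB2 : Adj2 x3 l3 r3 x4 l4 r4) (hB3 : Adj2 x3 l3 r3 x7 l7 r7)
    (nB12 : ¬Adj2 x1 l1 r1 x4 l4 r4) (nB13 : ¬Adj2 x1 l1 r1 x7 l7 r7)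
    (nB23 : ¬Adj2 x4 l4 r4 x7 l7 r7)
    (hC1 : Adj2 x5 l5 r5 x3 l3 r3) (hC2 : Adj2 x5 l5 r5 x6 l6 r6) (hC3 : Adj2 x5 l5 r5 x8 l8 r8)
    (nC12 : ¬Adj2 x3 l3 r3 x6 l6 r6) (nC13 : ¬Adj2 x3 l3 r3 x8 l8 r8)
    (nC23 : ¬Adj2 x6 l6 r6 x8 l8 r8)
    (n15 : ¬Adj2 x1 l1 r1 x5 l5 r5) (n45 : ¬Adj2 x4 l4 r4 x5 l5 r5)
    (n78 : ¬Adj2 x7 l7 r7 x8 l8 r8) :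
    (l7 = true ∧ r7 = false) ∨ (l7 = false ∧ r7 = true) := by
  rcases le_total x1 x3 with h|h
  · have c := core9 hA1 hA2 hA3 nA12 nA13 nA23 hB1 hB2 hB3 nB12 nB13 nB23
      hC1 hC2 hC3 nC12 nC13 nC23 n15 n45 n78 h
    exact Or.inl ⟨c.1, c.2.1⟩
  · have c := core9 (adj2_reflect hA1) (adj2_reflect hA2) (adj2_reflect hA3)
      (nadj2_reflect nA12) (nadj2_reflect nA13) (nadj2_reflect nA23)
      (adj2_reflect hB1) (adj2_reflect hB2) (adj2_reflect hB3)
      (nadj2_reflect nB12) (nadj2_reflect nB13) (nadj2_reflect nB23)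
      (adj2_reflect hC1) (adj2_reflect hC2) (adj2_reflect hC3)
      (nadj2_reflect nC12) (nadj2_reflect nC13) (nadj2_reflect nC23)
      (nadj2_reflect n15) (nadj2_reflect n45) (nadj2_reflect n78)
      (by linarith : -x1 - 1 ≤ -x3 - 1)
    exact Or.inr ⟨c.2.1, c.1⟩

/-- unoriented key lemma for the 14-vertex gadget -/
lemma key14 {x0 x1 x2 x3 x4 x5 x6 x7 x8 x9 x10 x11 x12 x13 : ℝ}
    {l0 r0 l1 r1 l2 r2 l3 r3 l4 r4 l5 r5 l6 r6 l7 r7 l8 r8 l9 r9 l10 r10 l11 r11 l12 r12 l13 r13 : Bool}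
    (hA1 : Adj2 x1 l1 r1 x0 l0 r0) (hA2 : Adj2 x1 l1 r1 x2 l2 r2) (hA3 : Adj2 x1 l1 r1 x3 l3 r3)
    (nA12 : ¬Adj2 x0 l0 r0 x2 l2 r2) (nA13 : ¬Adj2 x0 l0 r0 x3 l3 r3)
    (nA23 : ¬Adj2 x2 l2 r2 x3 l3 r3)
    (hB1 : Adj2 x3 l3 r3 x1 l1 r1) (hB2 : Adj2 x3 l3 r3 x4 l4 r4) (hB3 : Adj2 x3 l3 r3 x7 l7 r7)
    (nB12 : ¬Adj2 x1 l1 r1 x4 l4 r4) (nB13 : ¬Adj2 x1 l1 r1 x7 l7 r7)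
    (nB23 : ¬Adj2 x4 l4 r4 x7 l7 r7)
    (hC1 : Adj2 x5 l5 r5 x3 l3 r3) (hC2 : Adj2 x5 l5 r5 x6 l6 r6) (hC3 : Adj2 x5 l5 r5 x8 l8 r8)
    (nC12 : ¬Adj2 x3 l3 r3 x6 l6 r6) (nC13 : ¬Adj2 x3 l3 r3 x8 l8 r8)
    (nC23 : ¬Adj2 x6 l6 r6 x8 l8 r8)
    (hD1 : Adj2 x8 l8 r8 x5 l5 r5) (hD2 : Adj2 x8 l8 r8 x9 l9 r9) (hD3 : Adj2 x8 l8 r8 x11 l11 r11)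
    (nD12 : ¬Adj2 x5 l5 r5 x9 l9 r9) (nD13 : ¬Adj2 x5 l5 r5 x11 l11 r11)
    (nD23 : ¬Adj2 x9 l9 r9 x11 l11 r11)
    (hE1 : Adj2 x11 l11 r11 x10 l10 r10) (hE2 : Adj2 x11 l11 r11 x12 l12 r12)
    (hE3 : Adj2 x11 l11 r11 x13 l13 r13)
    (nE12 : ¬Adj2 x10 l10 r10 x12 l12 r12) (nE13 : ¬Adj2 x10 l10 r10 x13 l13 r13)
    (nE23 : ¬Adj2 x12 l12 r12 x13 l13 r13)
    (n15 : ¬Adj2 x1 l1 r1 x5 l5 r5) (n45 : ¬Adj2 x4 l4 r4 x5 l5 r5)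
    (n78 : ¬Adj2 x7 l7 r7 x8 l8 r8)
    (hdw2 : Adj2 x8 l8 r8 x10 l10 r10) (ncw2 : ¬Adj2 x5 l5 r5 x10 l10 r10) :
    (l7 = true ∧ r7 = false ∧ l10 = false ∧ r10 = true) ∨
    (l7 = false ∧ r7 = true ∧ l10 = true ∧ r10 = false) := by
  rcases le_total x1 x3 with h|h
  · have c := core14 hA1 hA2 hA3 nA12 nA13 nA23 hB1 hB2 hB3 nB12 nB13 nB23
      hC1 hC2 hC3 nC12 nC13 nC23 hD1 hD2 hD3 nD12 nD13 nD23 hE1 hE2 hE3 nE12 nE13 nE23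
      n15 n45 n78 hdw2 ncw2 h
    exact Or.inl c
  · have c := core14 (adj2_reflect hA1) (adj2_reflect hA2) (adj2_reflect hA3)
      (nadj2_reflect nA12) (nadj2_reflect nA13) (nadj2_reflect nA23)
      (adj2_reflect hB1) (adj2_reflect hB2) (adj2_reflect hB3)
      (nadj2_reflect nB12) (nadj2_reflect nB13) (nadj2_reflect nB23)
      (adj2_reflect hC1) (adj2_reflect hC2) (adj2_reflect hC3)
      (nadj2_reflect nC12) (nadj2_reflect nC13) (nadj2_reflect nC23)
      (adj2_reflect hD1) (adj2_reflect hD2) (adj2_reflect hD3)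
      (nadj2_reflect nD12) (nadj2_reflect nD13) (nadj2_reflect nD23)
      (adj2_reflect hE1) (adj2_reflect hE2) (adj2_reflect hE3)
      (nadj2_reflect nE12) (nadj2_reflect nE13) (nadj2_reflect nE23)
      (nadj2_reflect n15) (nadj2_reflect n45) (nadj2_reflect n78)
      (adj2_reflect hdw2) (nadj2_reflect ncw2)
      (by linarith : -x1 - 1 ≤ -x3 - 1)
    exact Or.inr ⟨c.2.1, c.1, c.2.2.2, c.2.2.1⟩


def E9L : List (Fin 9 × Fin 9) :=
  [(0,1),(1,2),(1,3),(3,4),(3,5),(3,7),(5,6),(5,7),(5,8),(6,7)]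

def g9 : SimpleGraph (Fin 9) where
  Adj u v := (u, v) ∈ E9L ∨ (v, u) ∈ E9L
  symm := ⟨fun u v h => h.symm⟩
  loopless := ⟨fun v h =>
    (by decide : ∀ u : Fin 9, ¬((u, u) ∈ E9L ∨ (u, u) ∈ E9L)) v h⟩

instance : DecidableRel g9.Adj :=
  fun u v => inferInstanceAs (Decidable ((u, v) ∈ E9L ∨ (v, u) ∈ E9L))

def E14L : List (Fin 14 × Fin 14) :=
  [(0,1),(1,2),(1,3),(3,4),(3,5),(3,7),(5,6),(5,7),(5,8),(6,7),
   (8,9),(8,10),(8,11),(9,10),(10,11),(11,12),(11,13)]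

def g14 : SimpleGraph (Fin 14) where
  Adj u v := (u, v) ∈ E14L ∨ (v, u) ∈ E14L
  symm := ⟨fun u v h => h.symm⟩
  loopless := ⟨fun v h =>
    (by decide : ∀ u : Fin 14, ¬((u, u) ∈ E14L ∨ (u, u) ∈ E14L)) v h⟩

instance : DecidableRel g14.Adj :=
  fun u v => inferInstanceAs (Decidable ((u, v) ∈ E14L ∨ (v, u) ∈ E14L))

lemma rep_adj2 {n : ℕ} {G : SimpleGraph (Fin n)} {f : Fin n → Set ℝ} (hrep : IsRep G f)
    {p : Fin n → ℝ} {l r : Fin n → Bool} (hf : ∀ v, f v = uI (p v) (l v) (r v))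
    {u v : Fin n} (hne : u ≠ v) (ha : G.Adj u v) :
    Adj2 (p u) (l u) (r u) (p v) (l v) (r v) :=
  (uI_inter _ _ _ _ _ _).mp (by rw [← hf u, ← hf v]; exact (hrep u v hne).mp ha)

lemma rep_nadj2 {n : ℕ} {G : SimpleGraph (Fin n)} {f : Fin n → Set ℝ} (hrep : IsRep G f)
    {p : Fin n → ℝ} {l r : Fin n → Bool} (hf : ∀ v, f v = uI (p v) (l v) (r v))
    {u v : Fin n} (hne : u ≠ v) (hna : ¬ G.Adj u v) :
    ¬ Adj2 (p u) (l u) (r u) (p v) (l v) (r v) :=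
  fun h => hna ((hrep u v hne).mpr (by rw [hf u, hf v]; exact (uI_inter _ _ _ _ _ _).mpr h))

noncomputable def f9 : Fin 9 → Set ℝ
  | 0 => uI (-1) true true
  | 1 => uI 0 true true
  | 2 => uI 0 false false
  | 3 => uI 1 true true
  | 4 => uI 1 false false
  | 5 => uI 2 true true
  | 6 => uI 2 false false
  | 7 => uI 2 true false
  | 8 => uI 3 true true

noncomputable def f14 : Fin 14 → Set ℝ
  | 0 => uI (-1) true true
  | 1 => uI 0 true true
  | 2 => uI 0 false false
  | 3 => uI 1 true true
  | 4 => uI 1 false false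
  | 5 => uI 2 true true
  | 6 => uI 2 false false
  | 7 => uI 2 true false
  | 8 => uI 3 true true
  | 9 => uI 3 false false
  | 10 => uI 3 false true
  | 11 => uI 4 true true
  | 12 => uI 4 false false
  | 13 => uI 5 true true

lemma isCC_uI (x : ℝ) : IsUnitCC (uI x true true) := ⟨x, (uI_cc x).symm⟩
lemma isOO_uI (x : ℝ) : IsUnitOO (uI x false false) := ⟨x, (uI_oo x).symm⟩
lemma isCO_uI (x : ℝ) : IsUnitCO (uI x true false) := ⟨x, (uI_co x).symm⟩
lemma isOC_uI (x : ℝ) : IsUnitOC (uI x false true) := ⟨x, (uI_oc x).symm⟩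

lemma rep9 : IsRep g9 f9 := by
  intro u v huv
  fin_cases u <;> fin_cases v <;> simp only [f9] <;>
    first
      | exact absurd rfl huv
      | (rw [uI_inter]; exact iff_of_true (by decide) (by norm_num [Adj2]))
      | (rw [uI_inter]; exact iff_of_false (by decide) (by norm_num [Adj2]))

lemma rep14 : IsRep g14 f14 := by
  intro u v huv
  fin_cases u <;> fin_cases v <;> simp only [f14] <;>
    first
      | exact absurd rfl huv
      | (rw [uI_inter]; exact iff_of_true (by decide) (by norm_num [Adj2]))
      | (rw [uI_inter]; exact iff_of_false (by decide) (by norm_num [Adj2]))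


theorem stmt10 :
    (∀ (n : ℕ) (G : SimpleGraph (Fin n)),
      (∃ f : Fin n → Set ℝ, IsRep G f ∧ ∀ v, IsUnitCC (f v) ∨ IsUnitOO (f v)) →
      AlmostMixedUIG G) ∧
    (∃ (n : ℕ) (G : SimpleGraph (Fin n)), AlmostMixedUIG G ∧
      ¬ ∃ f : Fin n → Set ℝ, IsRep G f ∧ ∀ v, IsUnitCC (f v) ∨ IsUnitOO (f v)) ∧
    (∀ (n : ℕ) (G : SimpleGraph (Fin n)), AlmostMixedUIG G → MixedUIG G) ∧
    (∃ (n : ℕ) (G : SimpleGraph (Fin n)), MixedUIG G ∧ ¬ AlmostMixedUIG G) := by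
  refine ⟨?_, ⟨9, g9, ?_, ?_⟩, ?_, ⟨14, g14, ?_, ?_⟩⟩
  · rintro n G ⟨f, hrep, h⟩
    exact ⟨f, hrep, fun v => (h v).imp id Or.inl⟩
  · refine ⟨f9, rep9, fun v => ?_⟩
    fin_cases v <;> simp only [f9] <;>
      first
        | exact Or.inl (isCC_uI _)
        | exact Or.inr (Or.inl (isOO_uI _))
        | exact Or.inr (Or.inr (isCO_uI _))
  · rintro ⟨f, hrep, htype⟩
    have hV : ∀ v, ∃ q L, f v = uI q L L := by
      intro v
      rcases htype v with ⟨q, hq⟩|⟨q, hq⟩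
      · exact ⟨q, true, by rw [hq, uI_cc]⟩
      · exact ⟨q, false, by rw [hq, uI_oo]⟩
    choose q L hf using hV
    have hA1 := rep_adj2 hrep hf (show (1:Fin 9) ≠ 0 by decide) (show g9.Adj 1 0 by decide)
    have hA2 := rep_adj2 hrep hf (show (1:Fin 9) ≠ 2 by decide) (show g9.Adj 1 2 by decide)
    have hA3 := rep_adj2 hrep hf (show (1:Fin 9) ≠ 3 by decide) (show g9.Adj 1 3 by decide)
    have nA12 := rep_nadj2 hrep hf (show (0:Fin 9) ≠ 2 by decide) (show ¬g9.Adj 0 2 by decide)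
    have nA13 := rep_nadj2 hrep hf (show (0:Fin 9) ≠ 3 by decide) (show ¬g9.Adj 0 3 by decide)
    have nA23 := rep_nadj2 hrep hf (show (2:Fin 9) ≠ 3 by decide) (show ¬g9.Adj 2 3 by decide)
    have hB1 := rep_adj2 hrep hf (show (3:Fin 9) ≠ 1 by decide) (show g9.Adj 3 1 by decide)
    have hB2 := rep_adj2 hrep hf (show (3:Fin 9) ≠ 4 by decide) (show g9.Adj 3 4 by decide)
    have hB3 := rep_adj2 hrep hf (show (3:Fin 9) ≠ 7 by decide) (show g9.Adj 3 7 by decide)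
    have nB12 := rep_nadj2 hrep hf (show (1:Fin 9) ≠ 4 by decide) (show ¬g9.Adj 1 4 by decide)
    have nB13 := rep_nadj2 hrep hf (show (1:Fin 9) ≠ 7 by decide) (show ¬g9.Adj 1 7 by decide)
    have nB23 := rep_nadj2 hrep hf (show (4:Fin 9) ≠ 7 by decide) (show ¬g9.Adj 4 7 by decide)
    have hC1 := rep_adj2 hrep hf (show (5:Fin 9) ≠ 3 by decide) (show g9.Adj 5 3 by decide)
    have hC2 := rep_adj2 hrep hf (show (5:Fin 9) ≠ 6 by decide) (show g9.Adj 5 6 by decide)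
    have hC3 := rep_adj2 hrep hf (show (5:Fin 9) ≠ 8 by decide) (show g9.Adj 5 8 by decide)
    have nC12 := rep_nadj2 hrep hf (show (3:Fin 9) ≠ 6 by decide) (show ¬g9.Adj 3 6 by decide)
    have nC13 := rep_nadj2 hrep hf (show (3:Fin 9) ≠ 8 by decide) (show ¬g9.Adj 3 8 by decide)
    have nC23 := rep_nadj2 hrep hf (show (6:Fin 9) ≠ 8 by decide) (show ¬g9.Adj 6 8 by decide)
    have n15 := rep_nadj2 hrep hf (show (1:Fin 9) ≠ 5 by decide) (show ¬g9.Adj 1 5 by decide)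
    have n45 := rep_nadj2 hrep hf (show (4:Fin 9) ≠ 5 by decide) (show ¬g9.Adj 4 5 by decide)
    have n78 := rep_nadj2 hrep hf (show (7:Fin 9) ≠ 8 by decide) (show ¬g9.Adj 7 8 by decide)
    rcases key9 hA1 hA2 hA3 nA12 nA13 nA23 hB1 hB2 hB3 nB12 nB13 nB23
      hC1 hC2 hC3 nC12 nC13 nC23 n15 n45 n78 with ⟨h1,h2⟩|⟨h1,h2⟩
    · exact boolclash h1 h2
    · exact boolclash h2 h1
  · rintro n G ⟨f, hrep, h⟩
    exact ⟨f, hrep, fun v => (h v).imp id (Or.imp id Or.inl)⟩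
  · refine ⟨f14, rep14, fun v => ?_⟩
    fin_cases v <;> simp only [f14] <;>
      first
        | exact Or.inl (isCC_uI _)
        | exact Or.inr (Or.inl (isOO_uI _))
        | exact Or.inr (Or.inr (Or.inl (isCO_uI _)))
        | exact Or.inr (Or.inr (Or.inr (isOC_uI _)))
  · rintro ⟨f, hrep, htype⟩
    have hV : ∀ v, ∃ q a b, f v = uI q a b ∧ (b = true → a = true) := by
      intro v
      rcases htype v with ⟨q, hq⟩|⟨q, hq⟩|⟨q, hq⟩
      · exact ⟨q, true, true, by rw [hq, uI_cc], fun _ => rfl⟩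
      · exact ⟨q, false, false, by rw [hq, uI_oo], fun h => h⟩
      · exact ⟨q, true, false, by rw [hq, uI_co], fun _ => rfl⟩
    choose q L R hf hLR using hV
    have hA1 := rep_adj2 hrep hf (show (1:Fin 14) ≠ 0 by decide) (show g14.Adj 1 0 by decide)
    have hA2 := rep_adj2 hrep hf (show (1:Fin 14) ≠ 2 by decide) (show g14.Adj 1 2 by decide)
    have hA3 := rep_adj2 hrep hf (show (1:Fin 14) ≠ 3 by decide) (show g14.Adj 1 3 by decide)
    have nA12 := rep_nadj2 hrep hf (show (0:Fin 14) ≠ 2 by decide) (show ¬g14.Adj 0 2 by decide)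
    have nA13 := rep_nadj2 hrep hf (show (0:Fin 14) ≠ 3 by decide) (show ¬g14.Adj 0 3 by decide)
    have nA23 := rep_nadj2 hrep hf (show (2:Fin 14) ≠ 3 by decide) (show ¬g14.Adj 2 3 by decide)
    have hB1 := rep_adj2 hrep hf (show (3:Fin 14) ≠ 1 by decide) (show g14.Adj 3 1 by decide)
    have hB2 := rep_adj2 hrep hf (show (3:Fin 14) ≠ 4 by decide) (show g14.Adj 3 4 by decide)
    have hB3 := rep_adj2 hrep hf (show (3:Fin 14) ≠ 7 by decide) (show g14.Adj 3 7 by decide)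
    have nB12 := rep_nadj2 hrep hf (show (1:Fin 14) ≠ 4 by decide) (show ¬g14.Adj 1 4 by decide)
    have nB13 := rep_nadj2 hrep hf (show (1:Fin 14) ≠ 7 by decide) (show ¬g14.Adj 1 7 by decide)
    have nB23 := rep_nadj2 hrep hf (show (4:Fin 14) ≠ 7 by decide) (show ¬g14.Adj 4 7 by decide)
    have hC1 := rep_adj2 hrep hf (show (5:Fin 14) ≠ 3 by decide) (show g14.Adj 5 3 by decide)
    have hC2 := rep_adj2 hrep hf (show (5:Fin 14) ≠ 6 by decide) (show g14.Adj 5 6 by decide)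
    have hC3 := rep_adj2 hrep hf (show (5:Fin 14) ≠ 8 by decide) (show g14.Adj 5 8 by decide)
    have nC12 := rep_nadj2 hrep hf (show (3:Fin 14) ≠ 6 by decide) (show ¬g14.Adj 3 6 by decide)
    have nC13 := rep_nadj2 hrep hf (show (3:Fin 14) ≠ 8 by decide) (show ¬g14.Adj 3 8 by decide)
    have nC23 := rep_nadj2 hrep hf (show (6:Fin 14) ≠ 8 by decide) (show ¬g14.Adj 6 8 by decide)
    have n15 := rep_nadj2 hrep hf (show (1:Fin 14) ≠ 5 by decide) (show ¬g14.Adj 1 5 by decide)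
    have n45 := rep_nadj2 hrep hf (show (4:Fin 14) ≠ 5 by decide) (show ¬g14.Adj 4 5 by decide)
    have n78 := rep_nadj2 hrep hf (show (7:Fin 14) ≠ 8 by decide) (show ¬g14.Adj 7 8 by decide)
    have hD1 := rep_adj2 hrep hf (show (8:Fin 14) ≠ 5 by decide) (show g14.Adj 8 5 by decide)
    have hD2 := rep_adj2 hrep hf (show (8:Fin 14) ≠ 9 by decide) (show g14.Adj 8 9 by decide)
    have hD3 := rep_adj2 hrep hf (show (8:Fin 14) ≠ 11 by decide) (show g14.Adj 8 11 by decide)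
    have nD12 := rep_nadj2 hrep hf (show (5:Fin 14) ≠ 9 by decide) (show ¬g14.Adj 5 9 by decide)
    have nD13 := rep_nadj2 hrep hf (show (5:Fin 14) ≠ 11 by decide) (show ¬g14.Adj 5 11 by decide)
    have nD23 := rep_nadj2 hrep hf (show (9:Fin 14) ≠ 11 by decide) (show ¬g14.Adj 9 11 by decide)
    have hE1 := rep_adj2 hrep hf (show (11:Fin 14) ≠ 10 by decide) (show g14.Adj 11 10 by decide)
    have hE2 := rep_adj2 hrep hf (show (11:Fin 14) ≠ 12 by decide) (show g14.Adj 11 12 by decide)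
    have hE3 := rep_adj2 hrep hf (show (11:Fin 14) ≠ 13 by decide) (show g14.Adj 11 13 by decide)
    have nE12 := rep_nadj2 hrep hf (show (10:Fin 14) ≠ 12 by decide) (show ¬g14.Adj 10 12 by decide)
    have nE13 := rep_nadj2 hrep hf (show (10:Fin 14) ≠ 13 by decide) (show ¬g14.Adj 10 13 by decide)
    have nE23 := rep_nadj2 hrep hf (show (12:Fin 14) ≠ 13 by decide) (show ¬g14.Adj 12 13 by decide)
    have hdw2 := rep_adj2 hrep hf (show (8:Fin 14) ≠ 10 by decide) (show g14.Adj 8 10 by decide)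
    have ncw2 := rep_nadj2 hrep hf (show (5:Fin 14) ≠ 10 by decide) (show ¬g14.Adj 5 10 by decide)
    rcases key14 hA1 hA2 hA3 nA12 nA13 nA23 hB1 hB2 hB3 nB12 nB13 nB23
      hC1 hC2 hC3 nC12 nC13 nC23 hD1 hD2 hD3 nD12 nD13 nD23 hE1 hE2 hE3 nE12 nE13 nE23
      n15 n45 n78 hdw2 ncw2 with ⟨_,_,h3,h4⟩|⟨h1,h2,_,_⟩
    · exact boolclash (hLR 10 h4) h3
    · exact boolclash (hLR 7 h2) h1
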